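/- Let 𝒜 ⊂ ℤ be an admissible set with card 𝒜 = n ≥ 1, let m ∈ [1,2], set λ_a = √(a² + m) for a ∈ ℤ, let M be the n×n matrix with entries M_{kl} = (3/(2π))(4 − 3δ_{kl})/(λ_k λ_l) for k, l ∈ 𝒜 (M is symmetric and invertible), let ℒ = ℤ \ 𝒜, let D = [1,2]^𝒜, let Ω(ρ) = ω(m) + ν M ρ where ω(m) = (√(a²+m))_{a∈𝒜}, and let Λ_a(ρ) = λ_a + ν (3/π) (1/λ_a) ∑_{l∈𝒜} ρ_l/λ_l for a ∈ ℒ. Then for every γ > 0 there exist ν₀ > 0 and c > 0 depending only on 𝒜 and γ such that for every 0 < ν ≤ ν₀ the following holds: if Ω′ : ℝ^𝒜 → ℝ^𝒜 is differentiable on D and satisfies ‖Ω′(ρ) − Ω(ρ)‖ + ‖DΩ′(ρ) − νM‖ ≤ c ν for all ρ ∈ D, then for every k ∈ ℤ^𝒜 with |k| > ν^{−γ} there is a unit vector z_k ∈ ℝ^𝒜 (one may take z_k = Mk/‖Mk‖) such that for all ρ ∈ D and all a, b ∈ ℒ: (i) |⟨∂_ρ(k · Ω′(ρ)), z_k⟩|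 ≥ ν; (ii) |⟨∂_ρ(k · Ω′(ρ) ± Λ_a(ρ)), z_k⟩| ≥ ν; (iii) |⟨∂_ρ(k · Ω′(ρ) + Λ_a(ρ) + Λ_b(ρ)), z_k⟩| ≥ ν; (iv) |⟨∂_ρ(k · Ω′(ρ) + Λ_a(ρ) − Λ_b(ρ)), z_k⟩| ≥ ν. -/

import Mathlib

open MeasureTheory
open scoped RealInnerProductSpace

/-- The matrix `M` with entries `M_{kl} = (3/(2π))(4 − 3δ_{kl})/(λ_k λ_l)`, `k, l ∈ 𝒜`,
where `λ_a = √(a² + m)`. -/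
noncomputable def waveM (A : Finset ℤ) (m : ℝ) : Matrix ↥A ↥A ℝ :=
  Matrix.of fun k l =>
    (3/(2*Real.pi)) * (4 - 3 * (if k = l then (1:ℝ) else 0)) /
      (Real.sqrt (((k : ℤ) : ℝ)^2 + m) * Real.sqrt (((l : ℤ) : ℝ)^2 + m))

/-- The internal frequency map `Ω(ρ) = ω(m) + ν M ρ`, where `ω(m)_a = √(a² + m)`. -/
noncomputable def waveOmega (A : Finset ℤ) (m ν : ℝ) (ρ : EuclideanSpace ℝ ↥A) :
    EuclideanSpace ℝ ↥A :=
  (EuclideanSpace.equiv ↥A ℝ).symm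
    (fun a => Real.sqrt (((a : ℤ) : ℝ)^2 + m) + ν * (waveM A m).mulVec ρ a)

/-- The external frequencies `Λ_a(ρ) = λ_a + ν (3/π) (1/λ_a) ∑_{l∈𝒜} ρ_l/λ_l`. -/
noncomputable def waveLambda (A : Finset ℤ) (m ν : ℝ) (a : ℤ)
    (ρ : EuclideanSpace ℝ ↥A) : ℝ :=
  Real.sqrt ((a : ℝ)^2 + m) +
    ν * (3/Real.pi) * (1/Real.sqrt ((a : ℝ)^2 + m)) *
      ∑ l : ↥A, ρ l / Real.sqrt (((l : ℤ) : ℝ)^2 + m)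

/-- The parameter cube `D = [1,2]^𝒜`. -/
def waveCube (A : Finset ℤ) : Set (EuclideanSpace ℝ ↥A) :=
  {ρ | ∀ a : ↥A, ρ a ∈ Set.Icc (1:ℝ) 2}

noncomputable def waveR (A : Finset ℤ) : ℝ := ((A.sup fun a => a.natAbs^2 : ℕ) : ℝ) + 2

lemma waveR_ge (A : Finset ℤ) : (2:ℝ) ≤ waveR A := by
  unfold waveR
  have : (0:ℝ) ≤ ((A.sup fun a => a.natAbs^2 : ℕ) : ℝ) := Nat.cast_nonneg _
  linarith

lemma wave_lam_bounds (A : Finset ℤ) {m : ℝ} (hm : m ∈ Set.Icc (1:ℝ) 2) (i : ↥A) :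
    1 ≤ ((i:ℤ):ℝ)^2 + m ∧ ((i:ℤ):ℝ)^2 + m ≤ waveR A := by
  constructor
  · nlinarith [hm.1, sq_nonneg (((i:ℤ):ℝ))]
  · have h1 : ((i:ℤ).natAbs^2 : ℕ) ≤ A.sup fun a => a.natAbs^2 :=
      Finset.le_sup (f := fun a => a.natAbs^2) i.2
    have h2 : (((i:ℤ).natAbs^2 : ℕ) : ℝ) = ((i:ℤ):ℝ)^2 := by
      push_cast
      rw [Nat.cast_natAbs]; push_cast; rw [sq_abs]
    have h3 : (((i:ℤ).natAbs^2 : ℕ) : ℝ) ≤ ((A.sup fun a => a.natAbs^2 : ℕ) : ℝ) := by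
      exact_mod_cast h1
    unfold waveR
    have := hm.2
    linarith [h2 ▸ h3]

lemma waveM_symm (A : Finset ℤ) (m : ℝ) (s l : ↥A) : waveM A m s l = waveM A m l s := by
  unfold waveM
  simp only [Matrix.of_apply]
  by_cases h : s = l
  · subst h; rfl
  · rw [if_neg h, if_neg (Ne.symm h)]; ring

lemma sum_sq_lam (A : Finset ℤ) (hn : 1 ≤ A.card) {m : ℝ} (hm : m ∈ Set.Icc (1:ℝ) 2)
    (v : ↥A → ℝ) :
    (3/(2*Real.pi*waveR A))^2 * ∑ i, v i^2 ≤ ∑ i, ((waveM A m).mulVec v i)^2 := by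
  classical
  have hπ := Real.pi_pos
  have hR := waveR_ge A
  set R := waveR A with hRdef
  set lam : ↥A → ℝ := fun i => Real.sqrt (((i:ℤ):ℝ)^2 + m) with hlam
  have hlam1 : ∀ i, 1 ≤ lam i := fun i => by
    rw [hlam]; exact Real.one_le_sqrt.2 (wave_lam_bounds A hm i).1
  have hlampos : ∀ i, 0 < lam i := fun i => lt_of_lt_of_le one_pos (hlam1 i)
  have hlamsq : ∀ i, (lam i)^2 = ((i:ℤ):ℝ)^2 + m := fun i =>
    Real.sq_sqrt (by nlinarith [(wave_lam_bounds A hm i).1])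
  have hlamsqR : ∀ i, (lam i)^2 ≤ R := fun i => by
    rw [hlamsq i]; exact (wave_lam_bounds A hm i).2
  set w : ↥A → ℝ := fun i => v i / lam i with hw
  set s : ℝ := ∑ i, w i with hs
  have hMv : ∀ i, (waveM A m).mulVec v i = 3/(2*Real.pi*lam i) * (4*s - 3*w i) := by
    intro i
    have hterm : ∀ l : ↥A, waveM A m i l * v l
        = (3/(2*Real.pi*lam i))*(4*w l) - (if i = l then (3/(2*Real.pi*lam i))*(3*w l) else 0) := by
      intro l
      by_cases h : i = l
      · subst h
        simp only [waveM, Matrix.of_apply, if_pos rfl, hw, eq_self_iff_true, if_true]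
        rw [show Real.sqrt (((i:ℤ):ℝ)^2 + m) = lam i from rfl]
        have h1 := (hlampos i).ne'
        have h2 := hπ.ne'
        field_simp
        try ring
      · simp only [waveM, Matrix.of_apply, if_neg h, hw]
        rw [show Real.sqrt (((i:ℤ):ℝ)^2 + m) = lam i from rfl,
            show Real.sqrt (((l:ℤ):ℝ)^2 + m) = lam l from rfl]
        have h1 := (hlampos i).ne'
        have h2 := (hlampos l).ne'
        have h3 := hπ.ne'
        field_simp
        try ring
    unfold Matrix.mulVec dotProduct
    rw [Finset.sum_congr rfl fun l _ => hterm l, Finset.sum_sub_distrib,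
      Finset.sum_ite_eq Finset.univ i, if_pos (Finset.mem_univ i)]
    have h4 : ∑ l : ↥A, 3/(2*Real.pi*lam i)*(4*w l) = 3/(2*Real.pi*lam i)*(4*s) := by
      rw [hs, Finset.mul_sum, Finset.mul_sum]
      try exact Finset.sum_congr rfl fun l _ => by ring
    rw [h4]
    ring
  have hn' : (1:ℝ) ≤ (Fintype.card ↥A : ℝ) := by
    rw [Fintype.card_coe]; exact_mod_cast hn
  have hcs : s^2 ≤ (Fintype.card ↥A : ℝ) * ∑ i, w i^2 := by
    rw [hs]; simpa using sq_sum_le_card_mul_sum_sq (s := Finset.univ) (f := w)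
  have hWnn : (0:ℝ) ≤ ∑ i, w i^2 := Finset.sum_nonneg fun i _ => sq_nonneg _
  have key1 : ∑ i, w i^2 ≤ ∑ i, (4*s - 3*w i)^2 := by
    have expand : ∑ i, (4*s - 3*w i)^2
        = 16*(Fintype.card ↥A : ℝ)*s^2 - 24*s^2 + 9*∑ i, w i^2 := by
      have h1 : ∀ i : ↥A, (4*s - 3*w i)^2 = 16*s^2 - 24*s*w i + 9*w i^2 := fun i => by ring
      rw [Finset.sum_congr rfl fun i _ => h1 i, Finset.sum_add_distrib, Finset.sum_sub_distrib,
        Finset.sum_const, ← Finset.mul_sum, ← Finset.mul_sum, nsmul_eq_mul, Finset.card_univ]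
      rw [show (∑ i, w i) = s from rfl]
      ring
    rw [expand]
    set nn : ℝ := (Fintype.card ↥A : ℝ)
    set W : ℝ := ∑ i, w i^2
    nlinarith [mul_nonneg (mul_nonneg (sq_nonneg s) (by linarith : (0:ℝ) ≤ 2*nn - 1))
        (by linarith : (0:ℝ) ≤ nn - 1), hcs, sq_nonneg s]
  have hc0 : (0:ℝ) < (3/(2*Real.pi))^2 := pow_pos (div_pos (by norm_num) (by linarith)) 2
  have step1 : ∀ i, (3/(2*Real.pi))^2 * (1/R) * (4*s - 3*w i)^2 ≤ ((waveM A m).mulVec v i)^2 := by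
    intro i
    rw [hMv i, mul_pow]
    have hl := (hlampos i).ne'
    have hp := hπ.ne'
    have h1 : (3/(2*Real.pi*lam i))^2 = (3/(2*Real.pi))^2 * (1/(lam i)^2) := by
      field_simp
    rw [h1]
    have h2 : (1:ℝ)/R ≤ 1/(lam i)^2 :=
      div_le_div_of_nonneg_left one_pos.le (by positivity) (hlamsqR i)
    nlinarith [sq_nonneg (4*s - 3*w i), mul_le_mul_of_nonneg_left h2 hc0.le]
  have step2 : ∀ i, (1/R) * v i ^2 ≤ w i ^2 := by
    intro i
    have h1 : v i^2 / R ≤ v i^2/(lam i)^2 :=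
      div_le_div_of_nonneg_left (sq_nonneg _) (pow_pos (hlampos i) 2) (hlamsqR i)
    calc (1/R) * v i^2 = v i^2 / R := by ring
      _ ≤ v i^2/(lam i)^2 := h1
      _ = w i ^2 := by rw [hw]; simp only; rw [div_pow]
  have c1 : (3/(2*Real.pi))^2 * (1/R) * ∑ i, (4*s-3*w i)^2 ≤ ∑ i, ((waveM A m).mulVec v i)^2 := by
    rw [Finset.mul_sum]
    exact Finset.sum_le_sum fun i _ => step1 i
  have c2 : (1/R) * ∑ i, v i^2 ≤ ∑ i, w i^2 := by
    rw [Finset.mul_sum]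
    exact Finset.sum_le_sum fun i _ => step2 i
  have hRpos : (0:ℝ) < R := by linarith
  have hp := hπ.ne'
  have hR0 := hRpos.ne'
  have heq : (3/(2*Real.pi*R))^2 * ∑ i, v i^2
      = (3/(2*Real.pi))^2 * (1/R) * ((1/R) * ∑ i, v i^2) := by
    rw [div_pow, div_pow, mul_pow, mul_pow]
    field_simp
  rw [heq]
  calc (3/(2*Real.pi))^2 * (1/R) * ((1/R) * ∑ i, v i^2)
      ≤ (3/(2*Real.pi))^2 * (1/R) * ∑ i, w i^2 := by
        apply mul_le_mul_of_nonneg_left c2 (by positivity)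
    _ ≤ (3/(2*Real.pi))^2 * (1/R) * ∑ i, (4*s-3*w i)^2 := by
        apply mul_le_mul_of_nonneg_left key1 (by positivity)
    _ ≤ _ := c1

lemma euclid_sum_abs_le {ι : Type*} [Fintype ι] (v : EuclideanSpace ℝ ι) :
    ∑ i, |v i| ≤ Real.sqrt (Fintype.card ι) * ‖v‖ := by
  have h1 : (∑ i, |v i|)^2 ≤ (Fintype.card ι : ℝ) * ∑ i, |v i|^2 := by
    simpa using sq_sum_le_card_mul_sum_sq (s := Finset.univ) (f := fun i => |v i|)
  have h2 : ∑ i, |v i|^2 = ∑ i, v i^2 := Finset.sum_congr rfl fun i _ => sq_abs _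
  have h3 : ‖v‖ = Real.sqrt (∑ i, v i^2) := by
    simp [EuclideanSpace.norm_eq, Real.norm_eq_abs, sq_abs]
  have h4 : (0:ℝ) ≤ ∑ i, |v i| := Finset.sum_nonneg fun i _ => abs_nonneg _
  calc ∑ i, |v i| = Real.sqrt ((∑ i, |v i|)^2) := (Real.sqrt_sq h4).symm
    _ ≤ Real.sqrt ((Fintype.card ι : ℝ) * ∑ i, v i^2) := Real.sqrt_le_sqrt (by rw [← h2]; exact h1)
    _ = Real.sqrt (Fintype.card ι) * ‖v‖ := by
        rw [Real.sqrt_mul (Nat.cast_nonneg _), h3]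

lemma euclid_inner_sum {ι : Type*} [Fintype ι] (x y : EuclideanSpace ℝ ι) :
    ⟪x, y⟫ = ∑ i, x i * y i := by
  simp [PiLp.inner_apply]
  exact Finset.sum_congr rfl fun i _ => mul_comm _ _

lemma waveM_norm_lower (A : Finset ℤ) (hn : 1 ≤ A.card) {m : ℝ} (hm : m ∈ Set.Icc (1:ℝ) 2)
    (v : EuclideanSpace ℝ ↥A) :
    3/(2*Real.pi*waveR A) * ‖v‖ ≤ ‖(Matrix.toEuclideanLin (waveM A m) v : EuclideanSpace ℝ ↥A)‖ := by
  classical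
  have hπ := Real.pi_pos
  have hR := waveR_ge A
  have hεnn : (0:ℝ) ≤ 3/(2*Real.pi*waveR A) := by positivity
  have hco : ∀ i, (Matrix.toEuclideanLin (waveM A m) v : EuclideanSpace ℝ ↥A) i
      = (waveM A m).mulVec (fun l => v l) i := by
    intro i
    simp [Matrix.toEuclideanLin_apply]
  have hnv : ‖v‖ = Real.sqrt (∑ i, v i^2) := by
    simp [EuclideanSpace.norm_eq, Real.norm_eq_abs, sq_abs]
  have hnMv : ‖(Matrix.toEuclideanLin (waveM A m) v : EuclideanSpace ℝ ↥A)‖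
      = Real.sqrt (∑ i, ((waveM A m).mulVec (fun l => v l) i)^2) := by
    simp only [EuclideanSpace.norm_eq, Real.norm_eq_abs, sq_abs]
    congr 1
    try exact Finset.sum_congr rfl fun i _ => by rw [hco i]
  rw [hnv, hnMv]
  have h := sum_sq_lam A hn hm (fun l => v l)
  calc 3/(2*Real.pi*waveR A) * Real.sqrt (∑ i, v i^2)
      = Real.sqrt ((3/(2*Real.pi*waveR A))^2 * ∑ i, v i^2) := by
        rw [Real.sqrt_mul (sq_nonneg _), Real.sqrt_sq hεnn]
    _ ≤ Real.sqrt (∑ i, ((waveM A m).mulVec (fun l => v l) i)^2) := Real.sqrt_le_sqrt h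
set_option maxHeartbeats 8000000 in
/-- Transversality for large `k`: with the above data, for every
`γ > 0` there are `ν₀, c > 0` depending only on `𝒜` and `γ` such that for `0 < ν ≤ ν₀`,
any `C¹`-small perturbation `Ω′` of `Ω` on `D` (i.e. `‖Ω′(ρ) − Ω(ρ)‖ + ‖DΩ′(ρ) − νM‖ ≤ cν`
on `D`) and any `k ∈ ℤ^𝒜` with `|k| > ν^{−γ}`, there is a unit vector `z_k` such that for
all `ρ ∈ D` and all `a, b ∈ ℒ = ℤ \ 𝒜` the four gradient lower bounds hold. -/
theorem stmt_19 (A : Finset ℤ) (hadm : ∀ j ∈ A, j ≠ 0 → -j ∉ A) (hn : 1 ≤ A.card)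
    (γ : ℝ) (hγ : 0 < γ) :
    ∃ ν₀ : ℝ, 0 < ν₀ ∧ ∃ c : ℝ, 0 < c ∧
      ∀ m ∈ Set.Icc (1:ℝ) 2,
      ∀ ν : ℝ, 0 < ν → ν ≤ ν₀ →
      ∀ Ω' : EuclideanSpace ℝ ↥A → EuclideanSpace ℝ ↥A,
        (∀ ρ ∈ waveCube A, DifferentiableAt ℝ Ω' ρ) →
        (∀ ρ ∈ waveCube A,
          ‖Ω' ρ - waveOmega A m ν ρ‖
            + ‖fderiv ℝ Ω' ρ
                - ν • (LinearMap.toContinuousLinearMap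
                    (Matrix.toEuclideanLin (waveM A m)))‖ ≤ c * ν) →
      ∀ k : ↥A → ℤ, ν ^ (-γ) < ((∑ a : ↥A, |k a| : ℤ) : ℝ) →
        ∃ z : EuclideanSpace ℝ ↥A, ‖z‖ = 1 ∧
          ∀ ρ ∈ waveCube A,
            -- (i)
            (ν ≤ |⟪gradient (fun ρ' => ∑ s : ↥A, (k s : ℝ) * Ω' ρ' s) ρ, z⟫|) ∧
            -- (ii), both signs
            (∀ a : ℤ, a ∉ A →
              ν ≤ |⟪gradient (fun ρ' => (∑ s : ↥A, (k s : ℝ) * Ω' ρ' s)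
                      + waveLambda A m ν a ρ') ρ, z⟫| ∧
              ν ≤ |⟪gradient (fun ρ' => (∑ s : ↥A, (k s : ℝ) * Ω' ρ' s)
                      - waveLambda A m ν a ρ') ρ, z⟫|) ∧
            -- (iii)
            (∀ a b : ℤ, a ∉ A → b ∉ A →
              ν ≤ |⟪gradient (fun ρ' => (∑ s : ↥A, (k s : ℝ) * Ω' ρ' s)
                      + waveLambda A m ν a ρ' + waveLambda A m ν b ρ') ρ, z⟫|) ∧
            -- (iv)
            (∀ a b : ℤ, a ∉ A → b ∉ A →
              ν ≤ |⟪gradient (fun ρ' => (∑ s : ↥A, (k s : ℝ) * Ω' ρ' s)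
                      + waveLambda A m ν a ρ' - waveLambda A m ν b ρ') ρ, z⟫|) := by
  classical
  have hπ := Real.pi_pos
  have hπ3 := Real.pi_gt_three
  have hR := waveR_ge A
  set ε : ℝ := 3/(2*Real.pi*waveR A) with hεdef
  have hε : 0 < ε := div_pos (by norm_num) (by nlinarith)
  have hεne := hε.ne'
  set sn : ℝ := Real.sqrt (A.card) with hsndef
  have hsn1 : (1:ℝ) ≤ sn := by
    rw [hsndef, show (1:ℝ) = Real.sqrt 1 from (Real.sqrt_one).symm]
    exact Real.sqrt_le_sqrt (by exact_mod_cast hn)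
  have hsn0 : (0:ℝ) < sn := by linarith
  set K : ℝ := (2/ε)*sn*(1+2*sn) with hKdef
  have hK : 0 < K := by
    apply mul_pos (mul_pos (div_pos two_pos hε) hsn0)
    linarith
  refine ⟨min 1 (K ^ (-(1/γ))), lt_min one_pos (Real.rpow_pos_of_pos hK _), ε/2,
    half_pos hε, ?_⟩
  intro m hm ν hν hνle Ω' hdiff hclose k hk
  have hν1 : ν ≤ 1 := le_trans hνle (min_le_left _ _)
  have hνK : ν ≤ K ^ (-(1/γ)) := le_trans hνle (min_le_right _ _)
  have hKν : K ≤ ν ^ (-γ) := by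
    have h1 := Real.rpow_le_rpow_of_nonpos hν hνK (by linarith : -γ ≤ 0)
    calc K = (K ^ (-(1/γ))) ^ (-γ) := by
          rw [← Real.rpow_mul hK.le, show -(1/γ) * -γ = 1 by field_simp, Real.rpow_one]
      _ ≤ ν ^ (-γ) := h1
  set Sk : ℝ := ∑ s : ↥A, |(k s : ℝ)| with hSkdef
  have hSkcast : ((∑ a : ↥A, |k a| : ℤ) : ℝ) = Sk := by
    rw [hSkdef]
    push_cast
    rfl
  have hKSk : K < Sk := lt_of_le_of_lt hKν (hSkcast ▸ hk)
  set k' : EuclideanSpace ℝ ↥A := (WithLp.equiv 2 (↥A → ℝ)).symm (fun s => (k s : ℝ))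
    with hk'def
  have hk'app : ∀ s, k' s = (k s : ℝ) := fun s => rfl
  have hk'norm : Sk ≤ sn * ‖k'‖ := by
    have h := euclid_sum_abs_le k'
    rw [Fintype.card_coe] at h
    calc Sk = ∑ s, |k' s| := Finset.sum_congr rfl fun s _ => by rw [hk'app]
      _ ≤ sn * ‖k'‖ := h
  have hεk : 1 + 2*sn ≤ (ε/2) * ‖k'‖ := by
    have h1 : (2/ε)*sn*(1+2*sn) < sn * ‖k'‖ := lt_of_lt_of_le hKSk hk'norm
    have h2 : (2/ε)*(1+2*sn) < ‖k'‖ := by nlinarith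
    have heq2 : (ε/2)*((2/ε)*(1+2*sn)) = 1+2*sn := by field_simp
    have h3 := mul_lt_mul_of_pos_left h2 (half_pos hε)
    linarith [heq2 ▸ h3]
  have hk'pos : 0 < ‖k'‖ := by nlinarith [norm_nonneg k', hεk]
  set u : EuclideanSpace ℝ ↥A := Matrix.toEuclideanLin (waveM A m) k' with hudef
  have hu : ε * ‖k'‖ ≤ ‖u‖ := waveM_norm_lower A hn hm k'
  have hupos : 0 < ‖u‖ := lt_of_lt_of_le (mul_pos hε hk'pos) hu
  set z : EuclideanSpace ℝ ↥A := ‖u‖⁻¹ • u with hzdef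
  have hznorm : ‖z‖ = 1 := by
    rw [hzdef, norm_smul, Real.norm_eq_abs, abs_inv, abs_of_nonneg (norm_nonneg u),
      inv_mul_cancel₀ hupos.ne']
  have hinneruz : ⟪u, z⟫ = ‖u‖ := by
    rw [hzdef, real_inner_smul_right, real_inner_self_eq_norm_sq]
    field_simp
  refine ⟨z, hznorm, ?_⟩
  intro ρ hρ
  have hT : HasFDerivAt Ω' (fderiv ℝ Ω' ρ) ρ := (hdiff ρ hρ).hasFDerivAt
  set T : EuclideanSpace ℝ ↥A →L[ℝ] EuclideanSpace ℝ ↥A := fderiv ℝ Ω' ρ with hTdef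
  set T₀ : EuclideanSpace ℝ ↥A →L[ℝ] EuclideanSpace ℝ ↥A :=
    ν • (LinearMap.toContinuousLinearMap (Matrix.toEuclideanLin (waveM A m))) with hT₀def
  have hTT₀ : ‖T - T₀‖ ≤ (ε/2) * ν := by
    have h := hclose ρ hρ
    have h2 := norm_nonneg (Ω' ρ - waveOmega A m ν ρ)
    rw [← hTdef] at h
    linarith
  set Lk : EuclideanSpace ℝ ↥A →L[ℝ] ℝ := ∑ s : ↥A, (k s : ℝ) • EuclideanSpace.proj s
    with hLkdef
  have hLkapp : ∀ v : EuclideanSpace ℝ ↥A, Lk v = ∑ s, (k s : ℝ) * v s := by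
    intro v
    rw [hLkdef]
    simp [ContinuousLinearMap.sum_apply, ContinuousLinearMap.smul_apply]
  have hLkinner : ∀ v : EuclideanSpace ℝ ↥A, Lk v = ⟪k', v⟫ := by
    intro v
    rw [hLkapp v, euclid_inner_sum]
    exact Finset.sum_congr rfl fun s _ => by rw [hk'app]
  have hLkT₀ : Lk (T₀ z) = ν * ‖u‖ := by
    have hcoord : ∀ s, (T₀ z) s = ν * ((waveM A m).mulVec (fun l => z l) s) := by
      intro s
      rw [hT₀def]
      simp [Matrix.toEuclideanLin_apply]
      try exact Or.inl rfl
      try rfl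
    rw [hLkapp]
    have h1 : ∑ s, (k s : ℝ) * (T₀ z) s
        = ν * ∑ s, (k s : ℝ) * (waveM A m).mulVec (fun l => z l) s := by
      rw [Finset.mul_sum]
      exact Finset.sum_congr rfl fun s _ => by rw [hcoord s]; ring
    rw [h1]
    have hswap : ∑ s, (k s : ℝ) * (waveM A m).mulVec (fun l => z l) s
        = ∑ l, ((waveM A m).mulVec (fun s => (k s : ℝ))) l * z l := by
      unfold Matrix.mulVec dotProduct
      simp_rw [Finset.mul_sum, Finset.sum_mul]
      rw [Finset.sum_comm]
      exact Finset.sum_congr rfl fun l _ => Finset.sum_congr rfl fun s _ => by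
        rw [waveM_symm A m s l]; ring
    rw [hswap]
    have huinner : ∑ l, ((waveM A m).mulVec (fun s => (k s : ℝ))) l * z l = ⟪u, z⟫ := by
      rw [euclid_inner_sum]
      refine Finset.sum_congr rfl fun l _ => ?_
      have hul : u l = ((waveM A m).mulVec (fun s => (k s : ℝ))) l := by
        rw [hudef]
        simp [Matrix.toEuclideanLin_apply]
        try rfl
      rw [hul]
    rw [huinner, hinneruz]
  have herr : |Lk ((T - T₀) z)| ≤ (ε/2) * ν * ‖k'‖ := by
    rw [hLkinner]
    calc |⟪k', (T - T₀) z⟫| ≤ ‖k'‖ * ‖(T - T₀) z‖ := abs_real_inner_le_norm _ _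
      _ ≤ ‖k'‖ * (‖T - T₀‖ * ‖z‖) :=
          mul_le_mul_of_nonneg_left ((T - T₀).le_opNorm z) (norm_nonneg _)
      _ = ‖k'‖ * ‖T - T₀‖ := by rw [hznorm, mul_one]
      _ ≤ ‖k'‖ * ((ε/2) * ν) := mul_le_mul_of_nonneg_left hTT₀ (norm_nonneg _)
      _ = (ε/2) * ν * ‖k'‖ := by ring
  have main : ∀ (ψ : EuclideanSpace ℝ ↥A → ℝ) (G : EuclideanSpace ℝ ↥A →L[ℝ] ℝ),
      HasFDerivAt ψ G ρ → |G z| ≤ 2*sn*ν →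
      ν ≤ |⟪gradient (fun ρ' => (∑ s : ↥A, (k s : ℝ) * Ω' ρ' s) + ψ ρ') ρ, z⟫| := by
    intro ψ G hψ hGz
    have hf : HasFDerivAt (fun ρ' => ∑ s : ↥A, (k s : ℝ) * Ω' ρ' s) (Lk.comp T) ρ := by
      have h := Lk.hasFDerivAt.comp ρ hT
      have heqf : (fun ρ' => ∑ s : ↥A, (k s : ℝ) * Ω' ρ' s) = Lk ∘ Ω' := by
        funext x
        rw [Function.comp_apply, hLkapp]
      rw [heqf]
      exact h
    have hφ : HasFDerivAt (fun ρ' => (∑ s : ↥A, (k s : ℝ) * Ω' ρ' s) + ψ ρ')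
        (Lk.comp T + G) ρ := hf.add hψ
    have hgrad : ⟪gradient (fun ρ' => (∑ s : ↥A, (k s : ℝ) * Ω' ρ' s) + ψ ρ') ρ, z⟫
        = (Lk.comp T + G) z := by
      have h1 : ⟪gradient (fun ρ' => (∑ s : ↥A, (k s : ℝ) * Ω' ρ' s) + ψ ρ') ρ, z⟫
          = fderiv ℝ (fun ρ' => (∑ s : ↥A, (k s : ℝ) * Ω' ρ' s) + ψ ρ') ρ z :=
        InnerProductSpace.toDual_symm_apply
      rw [h1, hφ.fderiv]
    have hdecomp : (Lk.comp T + G) z = ν * ‖u‖ + Lk ((T - T₀) z) + G z := by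
      rw [ContinuousLinearMap.add_apply, ContinuousLinearMap.comp_apply]
      have hh : Lk (T z) = Lk (T₀ z) + Lk ((T - T₀) z) := by
        rw [← map_add]
        congr 1
        rw [ContinuousLinearMap.sub_apply]
        abel
      rw [hh, hLkT₀]
    rw [hgrad, hdecomp]
    have hlow : ν ≤ ν * ‖u‖ + Lk ((T - T₀) z) + G z := by
      have p1 : ν * (ε * ‖k'‖) ≤ ν * ‖u‖ := mul_le_mul_of_nonneg_left hu hν.le
      have p2 : ν * (1 + 2*sn) ≤ ν * ((ε/2) * ‖k'‖) := mul_le_mul_of_nonneg_left hεk hν.le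
      have p3 := neg_abs_le (Lk ((T - T₀) z))
      have p4 := neg_abs_le (G z)
      nlinarith [herr, hGz]
    exact le_trans hlow (le_abs_self _)
  have lam : ∀ a : ℤ, ∃ G : EuclideanSpace ℝ ↥A →L[ℝ] ℝ,
      HasFDerivAt (waveLambda A m ν a) G ρ ∧ |G z| ≤ sn * ν := by
    intro a
    set lama : ℝ := Real.sqrt ((a:ℝ)^2 + m) with hlamadef
    have hlama1 : 1 ≤ lama := Real.one_le_sqrt.2 (by nlinarith [hm.1, sq_nonneg ((a:ℝ))])
    have hlamapos : 0 < lama := lt_of_lt_of_le one_pos hlama1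
    set G : EuclideanSpace ℝ ↥A →L[ℝ] ℝ :=
      (ν * (3/Real.pi) * (1/lama)) •
        ∑ l : ↥A, (1/Real.sqrt (((l:ℤ):ℝ)^2+m)) • (EuclideanSpace.proj l :
          EuclideanSpace ℝ ↥A →L[ℝ] ℝ) with hGdef
    have hGapp : ∀ x : EuclideanSpace ℝ ↥A,
        G x = ν * (3/Real.pi) * (1/lama) * ∑ l : ↥A, x l / Real.sqrt (((l:ℤ):ℝ)^2+m) := by
      intro x
      rw [hGdef]
      simp only [ContinuousLinearMap.smul_apply, ContinuousLinearMap.sum_apply,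
        ContinuousLinearMap.coe_smul', Pi.smul_apply, PiLp.proj_apply, smul_eq_mul]
      congr 1
      exact Finset.sum_congr rfl fun l _ => by ring
    refine ⟨G, ?_, ?_⟩
    · have h0 : HasFDerivAt (fun x => lama + G x) G ρ := G.hasFDerivAt.const_add lama
      have heqf : waveLambda A m ν a = fun x => lama + G x := by
        funext x
        rw [hGapp x]
        simp only [waveLambda]
        rfl
      rw [heqf]
      exact h0
    · rw [hGapp]
      have hlaml1 : ∀ l : ↥A, 1 ≤ Real.sqrt (((l:ℤ):ℝ)^2+m) :=
        fun l => Real.one_le_sqrt.2 (wave_lam_bounds A hm l).1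
      have hterm : ∀ l : ↥A, |z l / Real.sqrt (((l:ℤ):ℝ)^2+m)| ≤ |z l| := by
        intro l
        rw [abs_div, abs_of_nonneg (by positivity : (0:ℝ) ≤ Real.sqrt (((l:ℤ):ℝ)^2+m))]
        exact div_le_self (abs_nonneg _) (hlaml1 l)
      have hsum : |∑ l : ↥A, z l / Real.sqrt (((l:ℤ):ℝ)^2+m)| ≤ ∑ l : ↥A, |z l| :=
        (Finset.abs_sum_le_sum_abs _ _).trans (Finset.sum_le_sum fun l _ => hterm l)
      have hzsum : ∑ l : ↥A, |z l| ≤ sn := by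
        have h := euclid_sum_abs_le z
        rw [Fintype.card_coe, hznorm, mul_one] at h
        exact h
      have hCnn : (0:ℝ) ≤ ν * (3/Real.pi) * (1/lama) := by positivity
      have hCν : ν * (3/Real.pi) * (1/lama) ≤ ν := by
        have h1 : 3/Real.pi ≤ 1 := by
          rw [div_le_one hπ]; linarith
        have h2 : 1/lama ≤ 1 := by
          rw [div_le_one hlamapos]; exact hlama1
        have hx0 : (0:ℝ) ≤ 3/Real.pi := by positivity
        have hy0 : (0:ℝ) ≤ 1/lama := by positivity
        calc ν * (3/Real.pi) * (1/lama) ≤ (ν*1)*1 :=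
              mul_le_mul (mul_le_mul le_rfl h1 hx0 hν.le) h2 hy0 (by linarith)
          _ = ν := by ring
      rw [abs_mul, abs_of_nonneg hCnn]
      have habs := abs_nonneg (∑ l : ↥A, z l / Real.sqrt (((l:ℤ):ℝ)^2+m))
      calc ν * (3/Real.pi) * (1/lama) * |∑ l : ↥A, z l / Real.sqrt (((l:ℤ):ℝ)^2+m)|
          ≤ ν * sn := by nlinarith [le_trans hsum hzsum]
        _ = sn * ν := mul_comm _ _
  have h2snν : ∀ x : ℝ, |x| ≤ sn * ν → |x| ≤ 2*sn*ν := by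
    intro x hx
    nlinarith [mul_nonneg hsn0.le hν.le]
  refine ⟨?_, ?_, ?_, ?_⟩
  · have h0 := main (fun _ => (0:ℝ)) 0 (hasFDerivAt_const 0 ρ)
      (by simp; nlinarith [mul_nonneg hsn0.le hν.le])
    simpa using h0
  · intro a _
    obtain ⟨G, hGd, hGb⟩ := lam a
    constructor
    · exact main (waveLambda A m ν a) G hGd (h2snν _ hGb)
    · have h0 := main (fun ρ' => -(waveLambda A m ν a ρ')) (-G) hGd.neg
        (by rw [ContinuousLinearMap.neg_apply, abs_neg]; exact h2snν _ hGb)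
      simpa [sub_eq_add_neg] using h0
  · intro a b _ _
    obtain ⟨Ga, hGad, hGab⟩ := lam a
    obtain ⟨Gb, hGbd, hGbb⟩ := lam b
    have h0 := main (fun ρ' => waveLambda A m ν a ρ' + waveLambda A m ν b ρ') (Ga + Gb)
      (hGad.add hGbd)
      (by
        rw [ContinuousLinearMap.add_apply]
        calc |Ga z + Gb z| ≤ |Ga z| + |Gb z| := abs_add_le _ _
          _ ≤ 2*sn*ν := by linarith)
    simpa [← add_assoc] using h0
  · intro a b _ _
    obtain ⟨Ga, hGad, hGab⟩ := lam a
    obtain ⟨Gb, hGbd, hGbb⟩ := lam b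
    have h0 := main (fun ρ' => waveLambda A m ν a ρ' - waveLambda A m ν b ρ') (Ga - Gb)
      (hGad.sub hGbd)
      (by
        rw [ContinuousLinearMap.sub_apply, sub_eq_add_neg]
        calc |Ga z + -(Gb z)| ≤ |Ga z| + |-(Gb z)| := abs_add_le _ _
          _ = |Ga z| + |Gb z| := by rw [abs_neg]
          _ ≤ 2*sn*ν := by linarith)
    simpa [← add_sub_assoc] using h0
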